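/- Let a > 0 and 0 < b < a, let f ∈ C⁰([0,1]) and g ∈ C¹([0,1]). For ε > 0 with (1 − b²/a²) − 4 a² ε² π² > 0, define α_{1±} = (−1 ± √((1 − b²/a²) − 4 a² ε² π²))/(2ε), c₁ = ∫₀¹ f(x) e^{−b x/(2 a² ε)} sin(π x) dx − (2ε/√((1 − b²/a²) − 4 a² ε² π²)) ∫₀¹ (f(x)/(2ε) − g'(x)) e^{−b x/(2 a² ε)} sin(π x) dx, d₁ the same expression with the minus sign between the two terms replaced by a plus sign, and A₁(x,t) = e^{b x/(2 a² ε)} (c₁ e^{α_{1−} t} + d₁ e^{α_{1+} t}). Then there exist constants A > 0 and ε₀ > 0, depending only on a, b, max|f| and max|g'|, such that for all 0 < ε < ε₀, all x ∈ [0,1], and all t > 0: |A₁(x,t)| ≤ A ε · exp( (b/(2 a² ε)) ( x − (a²/b)(1 − √(1 − b²/a² − 4 a² ε² π²)) t ) ). -/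

import Mathlib

open Set Real

/-- `α_{n−}` in the Fourier series solution. -/
noncomputable def alphaM (a b ε : ℝ) (n : ℕ) : ℝ :=
  (-1 - Real.sqrt ((1 - b ^ 2 / a ^ 2) - 4 * a ^ 2 * n ^ 2 * ε ^ 2 * Real.pi ^ 2)) / (2 * ε)

/-- `α_{n+}` in the Fourier series solution. -/
noncomputable def alphaP (a b ε : ℝ) (n : ℕ) : ℝ :=
  (-1 + Real.sqrt ((1 - b ^ 2 / a ^ 2) - 4 * a ^ 2 * n ^ 2 * ε ^ 2 * Real.pi ^ 2)) / (2 * ε)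

/-- The coefficient `c_n` of the exponential Fourier modes. -/
noncomputable def cCoef (a b ε : ℝ) (f g : ℝ → ℝ) (n : ℕ) : ℝ :=
  (∫ x in (0:ℝ)..1, f x * Real.exp (-(b * x) / (2 * a ^ 2 * ε)) * Real.sin (n * Real.pi * x))
    - (2 * ε / Real.sqrt ((1 - b ^ 2 / a ^ 2) - 4 * a ^ 2 * n ^ 2 * ε ^ 2 * Real.pi ^ 2)) *
      ∫ x in (0:ℝ)..1, (f x / (2 * ε) - deriv g x) *
        Real.exp (-(b * x) / (2 * a ^ 2 * ε)) * Real.sin (n * Real.pi * x)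

/-- The coefficient `d_n` of the exponential Fourier modes. -/
noncomputable def dCoef (a b ε : ℝ) (f g : ℝ → ℝ) (n : ℕ) : ℝ :=
  (∫ x in (0:ℝ)..1, f x * Real.exp (-(b * x) / (2 * a ^ 2 * ε)) * Real.sin (n * Real.pi * x))
    + (2 * ε / Real.sqrt ((1 - b ^ 2 / a ^ 2) - 4 * a ^ 2 * n ^ 2 * ε ^ 2 * Real.pi ^ 2)) *
      ∫ x in (0:ℝ)..1, (f x / (2 * ε) - deriv g x) *
        Real.exp (-(b * x) / (2 * a ^ 2 * ε)) * Real.sin (n * Real.pi * x)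

/-- The amplitude `A_n(x,t) = e^{bx/(2a²ε)} (c_n e^{α_{n−}t} + d_n e^{α_{n+}t})`. -/
noncomputable def Amp (a b ε : ℝ) (f g : ℝ → ℝ) (n : ℕ) (x t : ℝ) : ℝ :=
  Real.exp (b * x / (2 * a ^ 2 * ε)) *
    (cCoef a b ε f g n * Real.exp (alphaM a b ε n * t)
      + dCoef a b ε f g n * Real.exp (alphaP a b ε n * t))

open MeasureTheory in
private lemma expInt' {l : ℝ} (hl : 0 < l) :
    ∫ x in (0:ℝ)..1, Real.exp (-(l * x)) = (1 - Real.exp (-l)) / l := by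
  have h : ∀ x ∈ uIcc (0:ℝ) 1, HasDerivAt (fun y => -Real.exp (-(l * y)) / l)
      (Real.exp (-(l * x))) x := by
    intro x _
    have h1 : HasDerivAt (fun y : ℝ => -(l * y)) (-l) x := by
      have h0 := ((hasDerivAt_id x).const_mul l).neg; simp only [mul_one] at h0; exact h0
    have h2 := (Real.hasDerivAt_exp (-(l * x))).comp x h1
    have h3 := (h2.neg).div_const l
    refine h3.congr_deriv ?_
    field_simp
  have hInt : IntervalIntegrable (fun x => Real.exp (-(l * x))) volume 0 1 :=
    Continuous.intervalIntegrable (by continuity) 0 1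
  rw [intervalIntegral.integral_eq_sub_of_hasDerivAt h hInt]
  field_simp
  simp only [mul_zero, neg_zero, Real.exp_zero]; ring

open MeasureTheory in
private lemma intBound' {l C : ℝ} (hl : 0 < l) (hC : 0 ≤ C) (h : ℝ → ℝ)
    (hb : ∀ᵐ x ∂(volume.restrict (Set.uIoc (0:ℝ) 1)), |h x| ≤ C * Real.exp (-(l * x))) :
    |∫ x in (0:ℝ)..1, h x| ≤ C / l := by
  have hg : IntervalIntegrable (fun x => C * Real.exp (-(l * x))) volume 0 1 :=
    Continuous.intervalIntegrable (by continuity) 0 1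
  have key := intervalIntegral.norm_integral_le_abs_of_norm_le (f := h)
    (g := fun x => C * Real.exp (-(l * x))) (by simpa using hb) hg
  rw [intervalIntegral.integral_const_mul, expInt' hl] at key
  have h1 : Real.exp (-l) ≤ 1 := Real.exp_le_one_iff.2 (by linarith)
  have h2 : |C * ((1 - Real.exp (-l)) / l)| = C * (1 - Real.exp (-l)) / l := by
    rw [abs_of_nonneg]
    · ring
    · have : (0:ℝ) ≤ 1 - Real.exp (-l) := by linarith
      positivity
  calc |∫ x in (0:ℝ)..1, h x| ≤ C * (1 - Real.exp (-l)) / l := by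
        rw [← h2]; simpa using key
    _ ≤ C / l := by
        gcongr
        nlinarith [Real.exp_pos (-l)]

set_option maxHeartbeats 1000000 in
open MeasureTheory in
/-- Bound on the amplitude of the first Fourier mode: there are `A > 0` and `ε₀ > 0`,
depending only on `a`, `b`, `max |f|` and `max |g'|`, such that for all `0 < ε < ε₀`,
`x ∈ [0,1]`, `t > 0`:
`|A₁(x,t)| ≤ A ε exp((b/(2a²ε)) (x − (a²/b)(1 − √(1 − b²/a² − 4a²ε²π²)) t))`. -/
theorem first_mode_bound
    (a b : ℝ) (ha : 0 < a) (hb : 0 < b) (hba : b < a)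
    (f g : ℝ → ℝ) (hf : ContinuousOn f (Icc 0 1)) (hg : ContDiffOn ℝ 1 g (Icc 0 1)) :
    ∃ A > (0:ℝ), ∃ ε₀ > (0:ℝ), ∀ ε : ℝ, 0 < ε → ε < ε₀ →
      ∀ x ∈ Icc (0:ℝ) 1, ∀ t : ℝ, 0 < t →
        |Amp a b ε f g 1 x t| ≤ A * ε *
          Real.exp ((b / (2 * a ^ 2 * ε)) *
            (x - (a ^ 2 / b) *
              (1 - Real.sqrt (1 - b ^ 2 / a ^ 2 - 4 * a ^ 2 * ε ^ 2 * π ^ 2)) * t)) := by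
  have ha' : a ≠ 0 := ne_of_gt ha
  have hb' : b ≠ 0 := ne_of_gt hb
  obtain ⟨Mf', hMf'⟩ := isCompact_Icc.exists_bound_of_continuousOn hf
  obtain ⟨Mg', hMg'⟩ := isCompact_Icc.exists_bound_of_continuousOn
    (hg.continuousOn_derivWithin (uniqueDiffOn_Icc one_pos) le_rfl)
  set Mf := max Mf' 0 with hMfdef
  set Mg := max Mg' 0 with hMgdef
  have hMf0 : 0 ≤ Mf := le_max_right _ _
  have hMg0 : 0 ≤ Mg := le_max_right _ _
  have hMf : ∀ y ∈ Icc (0:ℝ) 1, |f y| ≤ Mf :=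
    fun y hy => (hMf' y hy).trans (le_max_left _ _)
  have hMg : ∀ y ∈ Icc (0:ℝ) 1, |derivWithin g (Icc 0 1) y| ≤ Mg :=
    fun y hy => (hMg' y hy).trans (le_max_left _ _)
  clear_value Mf Mg
  have ha2 : (0:ℝ) < a ^ 2 := by positivity
  have hπ : (0:ℝ) < π := Real.pi_pos
  have hK : 0 < 1 - b ^ 2 / a ^ 2 := by
    have h1 : b ^ 2 < a ^ 2 := by nlinarith
    have h2 : b ^ 2 / a ^ 2 < 1 := (div_lt_one ha2).2 h1
    linarith
  set s0 := Real.sqrt ((1 - b ^ 2 / a ^ 2) / 2) with hs0def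
  have hs0 : 0 < s0 := Real.sqrt_pos.2 (by linarith)
  set A := 4 * a ^ 2 / b * (Mf + (Mf + 2 * Mg) / s0) + 1 with hAdef
  clear_value A
  have hA1 : 0 ≤ 4 * a ^ 2 / b * (Mf + (Mf + 2 * Mg) / s0) := by positivity
  have hApos : 0 < A := by linarith
  refine ⟨A, hApos, min 1 (Real.sqrt ((1 - b ^ 2 / a ^ 2) / (8 * a ^ 2 * π ^ 2))),
    lt_min one_pos (Real.sqrt_pos.2 (by positivity)), ?_⟩
  intro ε hε hεlt x hx t ht
  have hε' : ε ≠ 0 := ne_of_gt hε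
  have hε1 : ε ≤ 1 := le_of_lt (lt_of_lt_of_le hεlt (min_le_left _ _))
  have hεs : ε < Real.sqrt ((1 - b ^ 2 / a ^ 2) / (8 * a ^ 2 * π ^ 2)) :=
    lt_of_lt_of_le hεlt (min_le_right _ _)
  have hD2 : 4 * a ^ 2 * ε ^ 2 * π ^ 2 ≤ (1 - b ^ 2 / a ^ 2) / 2 := by
    have h1 : ε ^ 2 < (1 - b ^ 2 / a ^ 2) / (8 * a ^ 2 * π ^ 2) := (Real.lt_sqrt (le_of_lt hε)).1 hεs
    have h8 : (0:ℝ) < 8 * a ^ 2 * π ^ 2 := by positivity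
    have h2 : ε ^ 2 * (8 * a ^ 2 * π ^ 2) < 1 - b ^ 2 / a ^ 2 := by
      calc ε ^ 2 * (8 * a ^ 2 * π ^ 2)
          < (1 - b ^ 2 / a ^ 2) / (8 * a ^ 2 * π ^ 2) * (8 * a ^ 2 * π ^ 2) :=
            mul_lt_mul_of_pos_right h1 h8
        _ = 1 - b ^ 2 / a ^ 2 := by field_simp
    have h3 : 4 * a ^ 2 * ε ^ 2 * π ^ 2 = ε ^ 2 * (8 * a ^ 2 * π ^ 2) / 2 := by ring
    linarith
  -- normalize the goal
  simp only [Amp, cCoef, dCoef, alphaM, alphaP, Nat.cast_one, one_pow, mul_one, one_mul]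
  set D := 1 - b ^ 2 / a ^ 2 - 4 * a ^ 2 * ε ^ 2 * π ^ 2 with hDdef
  clear_value D
  have hDpos : 0 < D := by rw [hDdef]; linarith
  set S := Real.sqrt D with hSdef
  have hSge : s0 ≤ S := by
    rw [hSdef, hs0def]
    exact Real.sqrt_le_sqrt (by rw [hDdef]; linarith)
  have hSpos : 0 < S := lt_of_lt_of_le hs0 hSge
  set l := b / (2 * a ^ 2 * ε) with hldef
  clear_value l
  have hl : 0 < l := by rw [hldef]; positivity
  have hexpEq : ∀ y : ℝ, Real.exp (-(b * y) / (2 * a ^ 2 * ε)) = Real.exp (-(l * y)) := by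
    intro y; congr 1; rw [hldef]; ring
  set I1 := ∫ y in (0:ℝ)..1, f y * Real.exp (-(b * y) / (2 * a ^ 2 * ε)) *
      Real.sin (π * y) with hI1def
  set I2 := ∫ y in (0:ℝ)..1, (f y / (2 * ε) - deriv g y) *
      Real.exp (-(b * y) / (2 * a ^ 2 * ε)) * Real.sin (π * y) with hI2def
  have hIoc : Set.uIoc (0:ℝ) 1 = Ioc 0 1 := uIoc_of_le zero_le_one
  -- bound on I1
  have hI1b : |I1| ≤ Mf / l := by
    rw [hI1def]
    apply intBound' hl hMf0
    rw [hIoc]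
    refine (ae_restrict_iff' measurableSet_Ioc).2 (Filter.Eventually.of_forall ?_)
    intro y hy
    have hy' : y ∈ Icc (0:ℝ) 1 := Ioc_subset_Icc_self hy
    rw [hexpEq, abs_mul, abs_mul]
    calc |f y| * |Real.exp (-(l * y))| * |Real.sin (π * y)|
        ≤ Mf * |Real.exp (-(l * y))| * 1 := by
          gcongr
          · exact hMf y hy'
          · exact Real.abs_sin_le_one (π * y)
      _ = Mf * Real.exp (-(l * y)) := by
          rw [abs_of_pos (Real.exp_pos _), mul_one]
  -- bound on I2
  have hI2b : |I2| ≤ (Mf / (2 * ε) + Mg) / l := by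
    rw [hI2def]
    apply intBound' hl (by positivity)
    rw [hIoc]
    have hne : ∀ᵐ y : ℝ, y ≠ 1 := by
      refine MeasureTheory.ae_iff.2 ?_
      simp only [ne_eq, not_not]
      simpa using Real.volume_singleton
    refine (ae_restrict_iff' measurableSet_Ioc).2 ?_
    filter_upwards [hne] with y hy1 hy
    have hyo : y ∈ Ioo (0:ℝ) 1 := ⟨hy.1, lt_of_le_of_ne hy.2 hy1⟩
    have hy' : y ∈ Icc (0:ℝ) 1 := Ioo_subset_Icc_self hyo
    have hd : deriv g y = derivWithin g (Icc 0 1) y :=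
      (derivWithin_of_mem_nhds (Icc_mem_nhds hyo.1 hyo.2)).symm
    have hfs : |f y / (2 * ε) - deriv g y| ≤ Mf / (2 * ε) + Mg := by
      have h1 : |f y / (2 * ε)| ≤ Mf / (2 * ε) := by
        rw [abs_div, abs_of_pos (show (0:ℝ) < 2 * ε by linarith)]
        exact (div_le_div_iff_of_pos_right (by linarith)).2 (hMf y hy')
      have h2 : |deriv g y| ≤ Mg := by rw [hd]; exact hMg y hy'
      calc |f y / (2 * ε) - deriv g y| ≤ |f y / (2 * ε)| + |deriv g y| := abs_sub _ _
        _ ≤ Mf / (2 * ε) + Mg := add_le_add h1 h2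
    rw [hexpEq, abs_mul, abs_mul]
    calc |f y / (2 * ε) - deriv g y| * |Real.exp (-(l * y))| * |Real.sin (π * y)|
        ≤ (Mf / (2 * ε) + Mg) * |Real.exp (-(l * y))| * 1 := by
          gcongr
          · exact Real.abs_sin_le_one (π * y)
      _ = (Mf / (2 * ε) + Mg) * Real.exp (-(l * y)) := by
          rw [abs_of_pos (Real.exp_pos _), mul_one]
  -- combined coefficient bounds
  have hMfl : Mf / l = 2 * a ^ 2 * ε / b * Mf := by
    rw [hldef]; field_simp
  have h2es : 2 * ε / S * ((Mf / (2 * ε) + Mg) / l) =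
      2 * a ^ 2 * ε / b * ((Mf + 2 * ε * Mg) / S) := by
    rw [hldef]; field_simp
  have hεMg : ε * Mg ≤ Mg := mul_le_of_le_one_left hMg0 hε1
  have hfrac : (Mf + 2 * ε * Mg) / S ≤ (Mf + 2 * Mg) / s0 :=
    div_le_div₀ (by positivity) (by linarith) hs0 hSge
  have hcd : ∀ u : ℝ, |u| = 1 → |I1 + u * (2 * ε / S * I2)| ≤
      2 * a ^ 2 * ε / b * (Mf + (Mf + 2 * Mg) / s0) := by
    intro u hu
    have hq : (0:ℝ) < 2 * ε / S := by positivity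
    have h1 : |I1 + u * (2 * ε / S * I2)| ≤ |I1| + 2 * ε / S * |I2| := by
      calc |I1 + u * (2 * ε / S * I2)| ≤ |I1| + |u * (2 * ε / S * I2)| := abs_add_le _ _
        _ = |I1| + 2 * ε / S * |I2| := by
            rw [abs_mul, hu, one_mul, abs_mul, abs_of_pos hq]
    have h2 : 2 * ε / S * |I2| ≤ 2 * ε / S * ((Mf / (2 * ε) + Mg) / l) :=
      mul_le_mul_of_nonneg_left hI2b (le_of_lt hq)
    have h3 : 2 * a ^ 2 * ε / b * ((Mf + 2 * ε * Mg) / S) ≤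
        2 * a ^ 2 * ε / b * ((Mf + 2 * Mg) / s0) :=
      mul_le_mul_of_nonneg_left hfrac (by positivity)
    calc |I1 + u * (2 * ε / S * I2)| ≤ |I1| + 2 * ε / S * |I2| := h1
      _ ≤ Mf / l + 2 * ε / S * ((Mf / (2 * ε) + Mg) / l) := add_le_add hI1b h2
      _ = 2 * a ^ 2 * ε / b * Mf + 2 * a ^ 2 * ε / b * ((Mf + 2 * ε * Mg) / S) := by
          rw [hMfl, h2es]
      _ ≤ 2 * a ^ 2 * ε / b * Mf + 2 * a ^ 2 * ε / b * ((Mf + 2 * Mg) / s0) := by linarith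
      _ = 2 * a ^ 2 * ε / b * (Mf + (Mf + 2 * Mg) / s0) := by ring
  have hcb := hcd (-1) (by norm_num)
  have hdb := hcd 1 (by norm_num)
  rw [show I1 + (-1 : ℝ) * (2 * ε / S * I2) = I1 - 2 * ε / S * I2 by ring] at hcb
  rw [show I1 + (1 : ℝ) * (2 * ε / S * I2) = I1 + 2 * ε / S * I2 by ring] at hdb
  -- endgame
  set B := 2 * a ^ 2 * ε / b * (Mf + (Mf + 2 * Mg) / s0) with hBdef
  clear_value B
  have hBpos : 0 ≤ B := by rw [hBdef]; positivity
  set E1 := Real.exp ((-1 - S) / (2 * ε) * t) with hE1def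
  set E2 := Real.exp ((-1 + S) / (2 * ε) * t) with hE2def
  have hE1pos : 0 < E1 := Real.exp_pos _
  have hE2pos : 0 < E2 := Real.exp_pos _
  have hE12 : E1 ≤ E2 := by
    rw [hE1def, hE2def]
    apply Real.exp_le_exp.2
    apply mul_le_mul_of_nonneg_right _ (le_of_lt ht)
    apply (div_le_div_iff_of_pos_right (by linarith)).2
    linarith
  have hsum : |(I1 - 2 * ε / S * I2) * E1 + (I1 + 2 * ε / S * I2) * E2| ≤ 2 * B * E2 := by
    calc |(I1 - 2 * ε / S * I2) * E1 + (I1 + 2 * ε / S * I2) * E2|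
        ≤ |I1 - 2 * ε / S * I2| * E1 + |I1 + 2 * ε / S * I2| * E2 := by
          refine (abs_add_le _ _).trans ?_
          rw [abs_mul, abs_mul, abs_of_pos hE1pos, abs_of_pos hE2pos]
      _ ≤ B * E2 + B * E2 := by
          refine add_le_add ?_ ?_
          · exact (mul_le_mul hcb hE12 (le_of_lt hE1pos) hBpos)
          · exact mul_le_mul_of_nonneg_right hdb (le_of_lt hE2pos)
      _ = 2 * B * E2 := by ring
  have hLpos : (0:ℝ) < Real.exp (b * x / (2 * a ^ 2 * ε)) := Real.exp_pos _
  rw [abs_mul, abs_of_pos hLpos]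
  have hexpProd : Real.exp (b * x / (2 * a ^ 2 * ε)) * E2 =
      Real.exp (l * (x - a ^ 2 / b * (1 - S) * t)) := by
    rw [hE2def, ← Real.exp_add]
    congr 1
    rw [hldef]
    field_simp
    ring
  have h2B : 2 * B = (A - 1) * ε := by rw [hBdef, hAdef]; ring
  calc Real.exp (b * x / (2 * a ^ 2 * ε)) *
        |(I1 - 2 * ε / S * I2) * E1 + (I1 + 2 * ε / S * I2) * E2|
      ≤ Real.exp (b * x / (2 * a ^ 2 * ε)) * (2 * B * E2) :=
        mul_le_mul_of_nonneg_left hsum (le_of_lt hLpos)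
    _ = 2 * B * (Real.exp (b * x / (2 * a ^ 2 * ε)) * E2) := by ring
    _ = (A - 1) * ε * Real.exp (l * (x - a ^ 2 / b * (1 - S) * t)) := by
        rw [hexpProd, h2B]
    _ ≤ A * ε * Real.exp (l * (x - a ^ 2 / b * (1 - S) * t)) := by
        refine mul_le_mul_of_nonneg_right ?_
          (le_of_lt (Real.exp_pos (l * (x - a ^ 2 / b * (1 - S) * t))))
        exact mul_le_mul_of_nonneg_right (by linarith) (le_of_lt hε)
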